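/- arXiv:2308.12227 — 3 statements merged into one kernel-verified Lean document; each statement's English description precedes it below -/
import Mathlib

section
/- Let α, β ∈ ℝ^n and let Z, W ∈ ℝ^{n×k} have full column rank k with 1_nᵀ Z = 0 and 1_nᵀ W = 0. If α 1_nᵀ + 1_n αᵀ + Z Zᵀ = β 1_nᵀ + 1_n βᵀ + W Wᵀ, then α = β and there exists an orthogonal matrix Q ∈ O(k) with W = Z Q. -/
open Matrix

private lemma aux_inj {n k : ℕ} (Z : Matrix (Fin n) (Fin k) ℝ) (h : Z.rank = k)
    (v : Fin k → ℝ) (hv : Z *ᵥ v = 0) : v = 0 := by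
  have hrn := LinearMap.finrank_range_add_finrank_ker Z.mulVecLin
  rw [Module.finrank_fin_fun] at hrn
  have hrank : Module.finrank ℝ (LinearMap.range Z.mulVecLin) = k := h
  rw [hrank] at hrn
  have hker : Module.finrank ℝ (LinearMap.ker Z.mulVecLin) = 0 := by omega
  rw [Submodule.finrank_eq_zero] at hker
  have hmem : v ∈ LinearMap.ker Z.mulVecLin := by
    simpa [Matrix.mulVecLin] using hv
  rw [hker] at hmem
  simpa using hmem

private lemma aux_det {n k : ℕ} (Z : Matrix (Fin n) (Fin k) ℝ) (h : Z.rank = k) :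
    IsUnit (Zᵀ * Z).det := by
  rw [isUnit_iff_ne_zero]
  intro hdet
  obtain ⟨v, hv0, hv⟩ := (Matrix.exists_mulVec_eq_zero_iff).mpr hdet
  have hz : (Z *ᵥ v) ⬝ᵥ (Z *ᵥ v) = 0 := by
    calc (Z *ᵥ v) ⬝ᵥ (Z *ᵥ v) = (v ᵥ* Zᵀ) ⬝ᵥ (Z *ᵥ v) := by rw [Matrix.vecMul_transpose]
    _ = v ⬝ᵥ (Zᵀ *ᵥ (Z *ᵥ v)) := (Matrix.dotProduct_mulVec v Zᵀ _).symm
    _ = v ⬝ᵥ ((Zᵀ * Z) *ᵥ v) := by rw [Matrix.mulVec_mulVec]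
    _ = 0 := by rw [hv, dotProduct_zero]
  have : Z *ᵥ v = 0 := dotProduct_self_eq_zero.mp hz
  exact hv0 (aux_inj Z h v this)

/-- Identifiability of the semiparametric latent space model: under the
centering constraint `1ₙᵀ Z = 0` (and full column rank), the decomposition
`α 1ₙᵀ + 1ₙ αᵀ + Z Zᵀ` identifies `α` and identifies `Z` up to a common
orthogonal transformation of its rows. -/
theorem stmt4 {n k : ℕ} (α β : Fin n → ℝ) (Z W : Matrix (Fin n) (Fin k) ℝ)
    (hZrank : Z.rank = k) (hWrank : W.rank = k)
    (hZc : (1 : Fin n → ℝ) ᵥ* Z = 0) (hWc : (1 : Fin n → ℝ) ᵥ* W = 0)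
    (heq : vecMulVec α 1 + vecMulVec 1 α + Z * Zᵀ
          = vecMulVec β 1 + vecMulVec 1 β + W * Wᵀ) :
    α = β ∧ ∃ Q : Matrix (Fin k) (Fin k) ℝ, Q * Qᵀ = 1 ∧ W = Z * Q := by
  -- entrywise form of heq
  have key : ∀ i j, α i + α j + (Z * Zᵀ) i j = β i + β j + (W * Wᵀ) i j := by
    intro i j
    have := congrFun (congrFun heq i) j
    simpa [Matrix.add_apply, Matrix.vecMulVec_apply] using this
  -- column sums of Z, W vanish
  have hZcol : ∀ l, ∑ j, Z j l = 0 := by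
    intro l
    have := congrFun hZc l
    simpa [Matrix.vecMul, dotProduct] using this
  have hWcol : ∀ l, ∑ j, W j l = 0 := by
    intro l
    have := congrFun hWc l
    simpa [Matrix.vecMul, dotProduct] using this
  have hZs : ∀ i, ∑ j, (Z * Zᵀ) i j = 0 := by
    intro i
    simp only [Matrix.mul_apply, Matrix.transpose_apply]
    rw [Finset.sum_comm]
    simp [← Finset.mul_sum, ← Finset.sum_mul, hZcol]
  have hWs : ∀ i, ∑ j, (W * Wᵀ) i j = 0 := by
    intro i
    simp only [Matrix.mul_apply, Matrix.transpose_apply]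
    rw [Finset.sum_comm]
    simp [← Finset.mul_sum, ← Finset.sum_mul, hWcol]
  have hab : α = β := by
    rcases Nat.eq_zero_or_pos n with hn | hn
    · subst hn; funext i; exact i.elim0
    · have h1 : ∀ i, (n : ℝ) * α i + ∑ j, α j = (n : ℝ) * β i + ∑ j, β j := by
        intro i
        have hs : ∑ j, (α i + α j + (Z * Zᵀ) i j)
            = ∑ j, (β i + β j + (W * Wᵀ) i j) :=
          Finset.sum_congr rfl fun j _ => key i j
        simp only [Finset.sum_add_distrib, hZs i, hWs i, Finset.sum_const,
          Finset.card_univ, Fintype.card_fin, nsmul_eq_mul, add_zero] at hs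
        linarith [hs]
      have hnn : (0 : ℝ) < (n : ℝ) := by exact_mod_cast hn
      have h2 : ∑ j, α j = ∑ j, β j := by
        have hs2 : ∑ i, ((n : ℝ) * α i + ∑ j, α j)
            = ∑ i, ((n : ℝ) * β i + ∑ j, β j) :=
          Finset.sum_congr rfl fun i _ => h1 i
        simp only [Finset.sum_add_distrib, ← Finset.mul_sum, Finset.sum_const,
          Finset.card_univ, Fintype.card_fin, nsmul_eq_mul] at hs2
        nlinarith [hs2]
      funext i
      have := h1 i
      rw [h2] at this
      have : (n : ℝ) * α i = (n : ℝ) * β i := by linarith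
      exact mul_left_cancel₀ (ne_of_gt hnn) this
  subst hab
  refine ⟨rfl, ?_⟩
  -- Gram matrices agree
  have G : Z * Zᵀ = W * Wᵀ := by
    have := heq
    exact add_left_cancel this
  set S : Matrix (Fin k) (Fin k) ℝ := Zᵀ * Z with hSdef
  have hS : IsUnit S.det := aux_det Z hZrank
  have hSinv1 : S * S⁻¹ = 1 := Matrix.mul_nonsing_inv _ hS
  have hSinv2 : S⁻¹ * S = 1 := Matrix.nonsing_inv_mul _ hS
  have hSsymm : Sᵀ = S := by simp [hSdef, Matrix.transpose_mul]
  have hSisymm : (S⁻¹)ᵀ = S⁻¹ := by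
    rw [Matrix.transpose_nonsing_inv, hSsymm]
  set B : Matrix (Fin k) (Fin k) ℝ := Zᵀ * W with hBdef
  have hBt : Bᵀ = Wᵀ * Z := by simp [hBdef, Matrix.transpose_mul]
  have hBBt : B * Bᵀ = S * S := by
    have e1 : B * Bᵀ = Zᵀ * (W * Wᵀ) * Z := by
      rw [hBt, hBdef]
      simp only [Matrix.mul_assoc]
    rw [← G] at e1
    rw [e1, hSdef]
    simp only [Matrix.mul_assoc]
  set Q : Matrix (Fin k) (Fin k) ℝ := S⁻¹ * B with hQdef
  have hQt : Qᵀ = Bᵀ * S⁻¹ := by rw [hQdef, Matrix.transpose_mul, hSisymm]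
  have hQorth : Q * Qᵀ = 1 := by
    calc Q * Qᵀ = S⁻¹ * (B * Bᵀ) * S⁻¹ := by
          rw [hQdef, hQt]; simp only [Matrix.mul_assoc]
    _ = S⁻¹ * (S * S) * S⁻¹ := by rw [hBBt]
    _ = (S⁻¹ * S) * (S * S⁻¹) := by simp only [Matrix.mul_assoc]
    _ = 1 := by rw [hSinv1, hSinv2, Matrix.one_mul]
  refine ⟨Q, hQorth, ?_⟩
  -- key PSD equality :  Wᵀ W = Bᵀ S⁻¹ B
  have hSQ : S * Q = B := by rw [hQdef, ← Matrix.mul_assoc, hSinv1, Matrix.one_mul]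
  have hC : Bᵀ * S⁻¹ * B = (Z * Q)ᵀ * (Z * Q) := by
    calc Bᵀ * S⁻¹ * B = Qᵀ * B := by rw [hQt]
    _ = Qᵀ * (S * Q) := by rw [hSQ]
    _ = Qᵀ * Zᵀ * (Z * Q) := by rw [hSdef]; simp only [Matrix.mul_assoc]
    _ = (Z * Q)ᵀ * (Z * Q) := by conv_rhs => rw [Matrix.transpose_mul]
  have hT_psd : (Wᵀ * W).PosSemidef := by
    have := Matrix.posSemidef_conjTranspose_mul_self W
    rwa [Matrix.conjTranspose_eq_transpose_of_trivial] at this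
  have hC_psd : (Bᵀ * S⁻¹ * B).PosSemidef := by
    rw [hC]
    have := Matrix.posSemidef_conjTranspose_mul_self (Z * Q)
    rwa [Matrix.conjTranspose_eq_transpose_of_trivial] at this
  have hsq : (Wᵀ * W) ^ 2 = (Bᵀ * S⁻¹ * B) ^ 2 := by
    have e1 : (Wᵀ * W) ^ 2 = Wᵀ * (W * Wᵀ) * W := by
      rw [pow_two]; simp only [Matrix.mul_assoc]
    have e2 : (Bᵀ * S⁻¹ * B) ^ 2 = Bᵀ * S⁻¹ * (B * Bᵀ) * (S⁻¹ * B) := by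
      rw [pow_two]; simp only [Matrix.mul_assoc]
    rw [e1, ← G, e2, hBBt]
    calc Wᵀ * (Z * Zᵀ) * W = (Wᵀ * Z) * (Zᵀ * W) := by simp only [Matrix.mul_assoc]
    _ = Bᵀ * B := by rw [hBt, hBdef]
    _ = Bᵀ * S⁻¹ * (S * S) * (S⁻¹ * B) := by
        calc Bᵀ * B = Bᵀ * ((S⁻¹ * S) * ((S * S⁻¹) * B)) := by
              rw [hSinv1, hSinv2]; simp [Matrix.one_mul]
        _ = Bᵀ * S⁻¹ * (S * S) * (S⁻¹ * B) := by simp only [Matrix.mul_assoc]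
  have hTC : Wᵀ * W = Bᵀ * S⁻¹ * B := by
    open scoped MatrixOrder in
    exact (CFC.sq_eq_sq_iff _ _ hT_psd.nonneg hC_psd.nonneg).mp hsq
  -- now show W - Z * Q = 0
  have hD : (W - Z * Q)ᵀ * (W - Z * Q) = 0 := by
    have e1 : Wᵀ * (Z * Q) = Bᵀ * S⁻¹ * B := by
      rw [hQdef, ← Matrix.mul_assoc, hBt]; simp only [Matrix.mul_assoc]
    have e2 : (Z * Q)ᵀ * W = Bᵀ * S⁻¹ * B := by
      rw [Matrix.transpose_mul, hQt, Matrix.mul_assoc, hBdef]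
    have e3 : (Z * Q)ᵀ * (Z * Q) = Bᵀ * S⁻¹ * B := hC.symm
    rw [Matrix.transpose_sub, Matrix.sub_mul, Matrix.mul_sub, Matrix.mul_sub,
      e1, e2, e3, ← hTC]
    simp
  have hD0 : W - Z * Q = 0 := by
    have := (Matrix.conjTranspose_mul_self_eq_zero (A := W - Z * Q)).mp ?_
    · exact this
    · rwa [Matrix.conjTranspose_eq_transpose_of_trivial]
  exact (sub_eq_zero.mp hD0)
end

section
/- Let Z, W ∈ ℝ^{n×k} with W of full column rank k, and let σ_min(Wᵀ W) denote the smallest eigenvalue of Wᵀ W. Then dist²(Z, W) = min_{Q ∈ O(k)} ‖Z − W Q‖_F² ≤ ‖Z Zᵀ − W Wᵀ‖_F² / (2(√2 − 1) σ_min(Wᵀ W)). -/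
open Matrix

/-- The Frobenius norm of a real matrix. -/
noncomputable def frobNorm {n k : ℕ} (X : Matrix (Fin n) (Fin k) ℝ) : ℝ :=
  Real.sqrt (∑ i, ∑ j, (X i j) ^ 2)

/-- The orthogonally-invariant distance
`dist(Z, W) = inf_{Q ∈ O(k)} ‖Z - W Q‖_F`. -/
noncomputable def distO {n k : ℕ} (Z W : Matrix (Fin n) (Fin k) ℝ) : ℝ :=
  sInf {r : ℝ | ∃ Q : Matrix (Fin k) (Fin k) ℝ, Q * Qᵀ = 1 ∧
    r = frobNorm (Z - W * Q)}


namespace Stmt10Aux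

variable {n k : ℕ}

lemma trace_transpose_mul (X : Matrix (Fin n) (Fin k) ℝ) :
    trace (Xᵀ * X) = ∑ i, ∑ j, (X i j) ^ 2 := by
  have h : trace (Xᵀ * X) = ∑ j, ∑ i, (X i j) ^ 2 := by
    simp [Matrix.trace, Matrix.diag, Matrix.mul_apply, sq]
  rw [h, Finset.sum_comm]

lemma sum_sq_nonneg (X : Matrix (Fin n) (Fin k) ℝ) : 0 ≤ ∑ i, ∑ j, (X i j) ^ 2 := by
  positivity

lemma trace_mul_nonneg {P S : Matrix (Fin k) (Fin k) ℝ}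
    (hP : P.PosSemidef) (hS : S.PosSemidef) : 0 ≤ trace (P * S) := by
  obtain ⟨C, hC⟩ : ∃ C : Matrix (Fin k) (Fin k) ℝ, S = Cᴴ * C := by
    open scoped MatrixOrder in exact CStarAlgebra.nonneg_iff_eq_star_mul_self.mp hS.nonneg
  have h1 : trace (P * S) = trace (C * P * Cᴴ) := by
    rw [hC, ← Matrix.mul_assoc, Matrix.trace_mul_comm, ← Matrix.mul_assoc]
  rw [h1, Matrix.trace]
  apply Finset.sum_nonneg
  intro i _
  have hq := hP.dotProduct_mulVec_nonneg (star (fun a => C i a))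
  have h2 : Matrix.diag (C * P * Cᴴ) i = ∑ x, ∑ a, C i a * P a x * star (C i x) := by
    simp [Matrix.diag, Matrix.mul_apply, Matrix.conjTranspose_apply, Finset.sum_mul]
  have h3 : dotProduct (star (star fun a => C i a)) (P *ᵥ (star fun a => C i a)) =
      ∑ a, ∑ x, C i a * P a x * star (C i x) := by
    simp only [dotProduct, Matrix.mulVec, Finset.mul_sum, star_trivial, Pi.star_apply,
      star_star]
    refine Finset.sum_congr rfl fun a _ => Finset.sum_congr rfl fun x _ => by ring
  rw [h2, ← Finset.sum_comm, ← h3]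
  exact hq

end Stmt10Aux


namespace Stmt10AuxB

variable {k : ℕ}

lemma vecMulVec_transpose (u v : Fin k → ℝ) : (vecMulVec u v)ᵀ = vecMulVec v u := by
  ext i j; simp [vecMulVec_apply, mul_comm]

lemma vecMulVec_mul_vecMulVec (u v w x : Fin k → ℝ) :
    vecMulVec u v * vecMulVec w x = (v ⬝ᵥ w) • vecMulVec u x := by
  ext i j
  simp only [Matrix.mul_apply, vecMulVec_apply, Matrix.smul_apply, dotProduct,
    smul_eq_mul, Finset.sum_mul]
  rw [Finset.sum_congr rfl (fun q _ => by ring : ∀ q ∈ Finset.univ,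
      u i * v q * (w q * x j) = v q * w q * (u i * x j)), ← Finset.sum_mul]

lemma trace_vecMulVec_mul (u v : Fin k → ℝ) (B : Matrix (Fin k) (Fin k) ℝ) :
    trace (vecMulVec u v * B) = v ⬝ᵥ (B *ᵥ u) := by
  simp only [Matrix.trace, Matrix.diag, Matrix.mul_apply, vecMulVec_apply, dotProduct,
    Matrix.mulVec, Finset.mul_sum]
  rw [Finset.sum_comm]
  exact Finset.sum_congr rfl fun q _ => Finset.sum_congr rfl fun p _ => by ring

end Stmt10AuxB

namespace Stmt10AuxC
open Stmt10AuxB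

variable {k : ℕ}

noncomputable abbrev E (a b : Fin k) : Matrix (Fin k) (Fin k) ℝ :=
  vecMulVec (Pi.single a 1) (Pi.single b 1)

lemma E_mul_E (a b c d : Fin k) :
    E a b * E c d = (if c = b then (1:ℝ) else 0) • E a d := by
  rw [vecMulVec_mul_vecMulVec]
  congr 1
  rw [dotProduct_single, Pi.single_apply, mul_one]

lemma trace_E_mul (a b : Fin k) (B : Matrix (Fin k) (Fin k) ℝ) :
    trace (E a b * B) = B b a := by
  rw [trace_vecMulVec_mul, single_dotProduct, Matrix.mulVec_single]
  simp

set_option maxHeartbeats 1000000 in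
lemma symm_of_max (B : Matrix (Fin k) (Fin k) ℝ)
    (hmax : ∀ R : Matrix (Fin k) (Fin k) ℝ, R * Rᵀ = 1 → trace (Rᵀ * B) ≤ trace B) :
    Bᵀ = B := by
  have rot_mul : ∀ (F G : Matrix (Fin k) (Fin k) ℝ) (α β : ℝ), F * F = F → G * G = -F →
      F * G = G → G * F = G →
      (1 + α • F + β • G) * (1 + α • F - β • G) = 1 + (2*α + α*α + β*β) • F := by
    intro F G α β hF2 hG2 hFG hGF
    simp only [Matrix.add_mul, Matrix.sub_mul, Matrix.mul_add, Matrix.mul_sub,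
      Matrix.smul_mul, Matrix.mul_smul, one_mul, mul_one, hF2, hG2, hFG, hGF, smul_smul]
    module
  ext i j
  rcases eq_or_ne i j with rfl | hij
  · rfl
  set c : ℝ := B i i + B j j with hc
  set s : ℝ := B i j - B j i with hs
  set r : ℝ := Real.sqrt (c^2 + s^2) with hr
  have hcs : 0 ≤ c^2 + s^2 := by positivity
  have hr2 : r^2 = c^2 + s^2 := Real.sq_sqrt hcs
  have hsz : s = 0 → Bᵀ i j = B i j := by
    intro h0
    have : B i j = B j i := by
      have := hs ▸ h0; linarith [this]
    simp [Matrix.transpose_apply, this]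
  rcases eq_or_ne r 0 with hr0 | hrne
  · apply hsz
    have : c^2 + s^2 = 0 := by rw [← hr2, hr0]; ring
    nlinarith [sq_nonneg c, sq_nonneg s]
  have hrpos : 0 < r := lt_of_le_of_ne (Real.sqrt_nonneg _) (Ne.symm hrne)
  set F : Matrix (Fin k) (Fin k) ℝ := E i i + E j j with hF
  set G : Matrix (Fin k) (Fin k) ℝ := E i j - E j i with hG
  have hF2 : F * F = F := by
    simp [hF, Matrix.add_mul, Matrix.mul_add, E_mul_E, hij, hij.symm]
  have hG2 : G * G = -F := by
    simp [hG, hF, Matrix.sub_mul, Matrix.mul_sub, E_mul_E, hij, hij.symm]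
    abel
  have hFG : F * G = G := by
    simp [hF, hG, Matrix.add_mul, Matrix.mul_add, Matrix.sub_mul, Matrix.mul_sub,
      E_mul_E, hij, hij.symm]
  have hGF : G * F = G := by
    simp [hF, hG, Matrix.add_mul, Matrix.mul_add, Matrix.sub_mul, Matrix.mul_sub,
      E_mul_E, hij, hij.symm]
    abel
  set α : ℝ := c/r - 1 with hα
  set β : ℝ := s/r with hβ
  set R : Matrix (Fin k) (Fin k) ℝ := 1 + α • F + β • G with hR
  have hEt : ∀ a b : Fin k, (E a b)ᵀ = E b a := fun a b => vecMulVec_transpose _ _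
  have hRt : Rᵀ = 1 + α • F - β • G := by
    simp [hR, hF, hG, Matrix.transpose_add, Matrix.transpose_sub, Matrix.transpose_smul,
      hEt, smul_sub]
    abel
  have hcoef : 2*α + α*α + β*β = 0 := by
    have key : (c/r)^2 + (s/r)^2 = 1 := by
      rw [div_pow, div_pow, ← add_div, ← hr2]
      exact div_self (pow_ne_zero _ hrne)
    have : 2*α + α*α + β*β = (c/r)^2 + (s/r)^2 - 1 := by rw [hα, hβ]; ring
    rw [this, key]; ring
  have hRR : R * Rᵀ = 1 := by
    rw [hRt, hR, rot_mul F G α β hF2 hG2 hFG hGF, hcoef, zero_smul, add_zero]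
  have htrF : trace (F * B) = c := by
    rw [hF, Matrix.add_mul, trace_add, trace_E_mul, trace_E_mul]
  have htrG : trace (G * B) = -s := by
    rw [hG, Matrix.sub_mul, trace_sub, trace_E_mul, trace_E_mul, hs]; ring
  have htr : trace (Rᵀ * B) = trace B + (α * c + β * s) := by
    rw [hRt, Matrix.sub_mul, Matrix.add_mul, Matrix.smul_mul, Matrix.smul_mul, one_mul,
      trace_sub, trace_add, trace_smul, trace_smul, htrF, htrG]
    simp; ring
  have hle := hmax R hRR
  rw [htr] at hle
  have h1 : α * c + β * s ≤ 0 := by linarith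
  have expand : (α * c + β * s) * r = c*c + s*s - c*r := by
    rw [hα, hβ]; field_simp; ring
  have h1r : (α * c + β * s) * r ≤ 0 := mul_nonpos_of_nonpos_of_nonneg h1 hrpos.le
  rw [expand] at h1r
  apply hsz
  have hcr : r ≤ c := by nlinarith
  have hs2 : s^2 ≤ 0 := by nlinarith
  nlinarith [sq_nonneg s]

end Stmt10AuxC

namespace Stmt10AuxD
open Stmt10AuxB

variable {k : ℕ}

lemma eigenbasis_unit {M : Matrix (Fin k) (Fin k) ℝ} (hM : M.IsHermitian) (i : Fin k) :
    ∑ a, (hM.eigenvectorBasis i a) ^ 2 = 1 := by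
  have h1 : ‖hM.eigenvectorBasis i‖ = 1 := hM.eigenvectorBasis.orthonormal.1 i
  have h2 : ‖hM.eigenvectorBasis i‖ = Real.sqrt (∑ a, ‖hM.eigenvectorBasis i a‖ ^ 2) :=
    EuclideanSpace.norm_eq _
  rw [h1] at h2
  have h3 : ∑ a, ‖hM.eigenvectorBasis i a‖ ^ 2 = ∑ a, (hM.eigenvectorBasis i a) ^ 2 := by
    simp [Real.norm_eq_abs, sq_abs]
  rw [h3] at h2
  have := congrArg (· ^ 2) h2
  simpa [Real.sq_sqrt (by positivity : (0:ℝ) ≤ ∑ a, (hM.eigenvectorBasis i a) ^ 2)] using this.symm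

lemma eigenbasis_ne_zero {M : Matrix (Fin k) (Fin k) ℝ} (hM : M.IsHermitian) (i : Fin k) :
    (fun a => hM.eigenvectorBasis i a) ≠ (0 : Fin k → ℝ) := by
  intro h
  have := eigenbasis_unit hM i
  have hz : ∀ a, hM.eigenvectorBasis i a = 0 := fun a => congrFun h a
  simp [hz] at this

lemma posSemidef_of_max (B : Matrix (Fin k) (Fin k) ℝ) (hB : B.IsHermitian)
    (hmax : ∀ R : Matrix (Fin k) (Fin k) ℝ, R * Rᵀ = 1 → trace (Rᵀ * B) ≤ trace B) :
    B.PosSemidef := by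
  apply hB.posSemidef_iff_eigenvalues_nonneg.mpr
  intro i
  set v : Fin k → ℝ := fun a => hB.eigenvectorBasis i a with hv
  have hunit : ∑ a, v a ^ 2 = 1 := eigenbasis_unit hB i
  have hvv : v ⬝ᵥ v = 1 := by
    simpa [dotProduct, sq] using hunit
  have heig : B *ᵥ v = hB.eigenvalues i • v := hB.mulVec_eigenvectorBasis i
  set R : Matrix (Fin k) (Fin k) ℝ := 1 - (2:ℝ) • vecMulVec v v with hR
  have hRt : Rᵀ = R := by
    simp [hR, Matrix.transpose_sub, Matrix.transpose_smul, vecMulVec_transpose]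
  have hRR : R * Rᵀ = 1 := by
    rw [hRt, hR]
    simp only [Matrix.sub_mul, Matrix.mul_sub, one_mul, mul_one, Matrix.smul_mul,
      Matrix.mul_smul, vecMulVec_mul_vecMulVec, hvv, smul_smul, one_smul]
    module
  have htrv : trace (vecMulVec v v * B) = hB.eigenvalues i := by
    rw [trace_vecMulVec_mul, heig, dotProduct_smul, hvv]
    simp
  have htr : trace (Rᵀ * B) = trace B - 2 * hB.eigenvalues i := by
    rw [hRt, hR, Matrix.sub_mul, one_mul, trace_sub, Matrix.smul_mul, trace_smul, htrv]
    simp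
  have := hmax R hRR
  rw [htr] at this
  linarith [show (0 : Fin k → ℝ) i = 0 from rfl]

end Stmt10AuxD

namespace Stmt10AuxE
open Stmt10AuxD

variable {k : ℕ}

lemma shift_posSemidef (M : Matrix (Fin k) (Fin k) ℝ) (hM : M.IsHermitian) (c : ℝ)
    (h : ∀ (μ : ℝ) (v : Fin k → ℝ), v ≠ 0 → M *ᵥ v = μ • v → c ≤ μ) :
    (M - c • 1).PosSemidef := by
  have hMc : (M - c • (1 : Matrix (Fin k) (Fin k) ℝ)).IsHermitian := by
    show (M - c • (1 : Matrix (Fin k) (Fin k) ℝ))ᴴ = _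
    rw [Matrix.conjTranspose_sub, Matrix.conjTranspose_smul, Matrix.conjTranspose_one,
      hM.eq, star_trivial]
  apply hMc.posSemidef_iff_eigenvalues_nonneg.mpr
  intro i
  set v : Fin k → ℝ := fun a => hMc.eigenvectorBasis i a with hv
  have heig : (M - c • 1) *ᵥ v = hMc.eigenvalues i • v := hMc.mulVec_eigenvectorBasis i
  have hvne : v ≠ 0 := eigenbasis_ne_zero hMc i
  have hMv : M *ᵥ v = (hMc.eigenvalues i + c) • v := by
    have h1 : (M - c • (1 : Matrix (Fin k) (Fin k) ℝ)) *ᵥ v = M *ᵥ v - c • v := by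
      rw [Matrix.sub_mulVec, Matrix.smul_mulVec, Matrix.one_mulVec]
    rw [h1] at heig
    have := congrArg (· + c • v) heig
    simpa [add_smul, sub_add_cancel] using this
  have := h _ v hvne hMv
  linarith [show (0 : Fin k → ℝ) i = 0 from rfl]

lemma exists_max_orth (k : ℕ) (A₀ : Matrix (Fin k) (Fin k) ℝ) :
    ∃ Q : Matrix (Fin k) (Fin k) ℝ, Q * Qᵀ = 1 ∧
      ∀ P : Matrix (Fin k) (Fin k) ℝ, P * Pᵀ = 1 →
        trace (Pᵀ * A₀) ≤ trace (Qᵀ * A₀) := by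
  set O : Set (Matrix (Fin k) (Fin k) ℝ) := {Q | Q * Qᵀ = 1} with hO
  have h1 : (1 : Matrix (Fin k) (Fin k) ℝ) ∈ O := by simp [hO]
  have hclosed : IsClosed O := by
    have : O = (fun Q : Matrix (Fin k) (Fin k) ℝ => Q * Qᵀ) ⁻¹' {1} := by
      ext Q; simp [hO]
    rw [this]
    exact IsClosed.preimage (continuous_id.matrix_mul continuous_id.matrix_transpose)
      isClosed_singleton
  have hK : IsCompact {M : Matrix (Fin k) (Fin k) ℝ | ∀ i j, M i j ∈ Set.Icc (-1:ℝ) 1} := by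
    have heq : {M : Matrix (Fin k) (Fin k) ℝ | ∀ i j, M i j ∈ Set.Icc (-1:ℝ) 1} =
        (Set.univ.pi fun _ : Fin k => Set.univ.pi fun _ : Fin k => Set.Icc (-1:ℝ) 1 :
          Set (Matrix (Fin k) (Fin k) ℝ)) := by
      ext M
      exact ⟨fun h i _ j _ => h i j, fun h i j => h i (Set.mem_univ i) j (Set.mem_univ j)⟩
    rw [heq]
    exact (isCompact_univ_pi fun _ => isCompact_univ_pi fun _ => isCompact_Icc :
      IsCompact (Set.univ.pi fun _ : Fin k => Set.univ.pi fun _ : Fin k => Set.Icc (-1:ℝ) 1))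
  have hsub : O ⊆ {M : Matrix (Fin k) (Fin k) ℝ | ∀ i j, M i j ∈ Set.Icc (-1:ℝ) 1} := by
    intro Q hQ i j
    have hdiag : (Q * Qᵀ) i i = 1 := by rw [hQ]; simp
    have hsum : ∑ x, Q i x ^ 2 = 1 := by
      rw [Matrix.mul_apply] at hdiag
      simpa [sq] using hdiag
    have hle : Q i j ^ 2 ≤ 1 := by
      rw [← hsum]
      exact Finset.single_le_sum (fun x _ => sq_nonneg (Q i x)) (Finset.mem_univ j)
    constructor
    · nlinarith
    · nlinarith
  have hOcompact : IsCompact O := hK.of_isClosed_subset hclosed hsub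
  have hcont : Continuous fun Q : Matrix (Fin k) (Fin k) ℝ => trace (Qᵀ * A₀) :=
    (continuous_id.matrix_transpose.matrix_mul continuous_const).matrix_trace
  obtain ⟨Q, hQO, hQmax⟩ := hOcompact.exists_isMaxOn ⟨1, h1⟩ hcont.continuousOn
  exact ⟨Q, hQO, fun P hP => hQmax hP⟩

end Stmt10AuxE


open Stmt10Aux Stmt10AuxB Stmt10AuxC Stmt10AuxD Stmt10AuxE

lemma tr_quad {n k : ℕ} (A B C D : Matrix (Fin n) (Fin k) ℝ) :
    trace (A * Bᵀ * (C * Dᵀ)) = trace ((Dᵀ * A) * (Bᵀ * C)) := by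
  rw [← Matrix.mul_assoc, Matrix.trace_mul_comm]
  simp only [Matrix.mul_assoc]

set_option maxHeartbeats 3000000 in
/-- If `W` has full column rank and `σ` is the smallest eigenvalue of `Wᵀ W`,
then `dist²(Z, W) ≤ ‖Z Zᵀ - W Wᵀ‖_F² / (2(√2 - 1) σ)`. -/
theorem stmt10 {n k : ℕ} (Z W : Matrix (Fin n) (Fin k) ℝ) (hW : W.rank = k)
    (σ : ℝ)
    (hσeig : ∃ v : Fin k → ℝ, v ≠ 0 ∧ (Wᵀ * W) *ᵥ v = σ • v)
    (hσmin : ∀ (μ : ℝ) (v : Fin k → ℝ), v ≠ 0 → (Wᵀ * W) *ᵥ v = μ • v → σ ≤ μ) :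
    distO Z W ^ 2 ≤ frobNorm (Z * Zᵀ - W * Wᵀ) ^ 2 / (2 * (Real.sqrt 2 - 1) * σ) := by
  classical
  -- W has trivial kernel
  have hWinj : ∀ v : Fin k → ℝ, W *ᵥ v = 0 → v = 0 := by
    intro v hv
    have hker : LinearMap.ker W.mulVecLin = ⊥ := by
      have hrn := LinearMap.finrank_range_add_finrank_ker W.mulVecLin
      unfold Matrix.rank at hW
      rw [hW] at hrn
      have hdom : Module.finrank ℝ (Fin k → ℝ) = k := by simp
      rw [hdom] at hrn
      have hzero : Module.finrank ℝ (LinearMap.ker W.mulVecLin) = 0 := by omega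
      exact Submodule.finrank_eq_zero.mp hzero
    have hmem : v ∈ LinearMap.ker W.mulVecLin := by
      rw [LinearMap.mem_ker]; simpa [Matrix.mulVecLin_apply] using hv
    rw [hker] at hmem; simpa using hmem
  -- σ > 0
  obtain ⟨v₀, hv₀, hveq⟩ := hσeig
  have hσpos : 0 < σ := by
    have hWv : W *ᵥ v₀ ≠ 0 := fun h => hv₀ (hWinj _ h)
    have h1 : (W *ᵥ v₀) ⬝ᵥ (W *ᵥ v₀) = σ * (v₀ ⬝ᵥ v₀) := by
      have h2 : v₀ ⬝ᵥ ((Wᵀ * W) *ᵥ v₀) = σ * (v₀ ⬝ᵥ v₀) := by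
        rw [hveq, dotProduct_smul]; simp
      have h3 : v₀ ⬝ᵥ ((Wᵀ * W) *ᵥ v₀) = (W *ᵥ v₀) ⬝ᵥ (W *ᵥ v₀) := by
        rw [← Matrix.mulVec_mulVec, Matrix.dotProduct_mulVec, Matrix.vecMul_transpose]
      rw [← h3, h2]
    have hWpos : 0 < (W *ᵥ v₀) ⬝ᵥ (W *ᵥ v₀) :=
      lt_of_le_of_ne (Finset.sum_nonneg fun x _ => mul_self_nonneg _)
        (Ne.symm (fun h => hWv (dotProduct_self_eq_zero.mp h)))
    have hvpos : 0 < v₀ ⬝ᵥ v₀ :=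
      lt_of_le_of_ne (Finset.sum_nonneg fun x _ => mul_self_nonneg _)
        (Ne.symm (fun h => hv₀ (dotProduct_self_eq_zero.mp h)))
    nlinarith
  -- Wᵀ W - σ 1 is PSD
  have hWWherm : (Wᵀ * W).IsHermitian := by
    show (Wᵀ * W)ᴴ = _
    rw [Matrix.conjTranspose_mul, Matrix.conjTranspose_eq_transpose_of_trivial,
      Matrix.conjTranspose_eq_transpose_of_trivial, Matrix.transpose_transpose]
  have hshift : (Wᵀ * W - σ • 1).PosSemidef := shift_posSemidef _ hWWherm σ hσmin
  -- optimal orthogonal Q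
  obtain ⟨Q, hQorth, hQmax⟩ := exists_max_orth k (Wᵀ * Z)
  have hQQ : Qᵀ * Q = 1 := mul_eq_one_comm.mp hQorth
  set X : Matrix (Fin n) (Fin k) ℝ := W * Q with hX
  set Δ : Matrix (Fin n) (Fin k) ℝ := Z - X with hΔ
  set N : Matrix (Fin k) (Fin k) ℝ := Xᵀ * Z with hN
  have hNalt : N = Qᵀ * (Wᵀ * Z) := by rw [hN, hX, Matrix.transpose_mul, Matrix.mul_assoc]
  have hmaxN : ∀ R : Matrix (Fin k) (Fin k) ℝ, R * Rᵀ = 1 → trace (Rᵀ * N) ≤ trace N := by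
    intro R hR
    have hQR : (Q * R) * (Q * R)ᵀ = 1 := by
      rw [Matrix.transpose_mul]
      calc Q * R * (Rᵀ * Qᵀ) = Q * (R * Rᵀ) * Qᵀ := by simp only [Matrix.mul_assoc]
        _ = 1 := by rw [hR, Matrix.mul_one, hQorth]
    have hle := hQmax (Q * R) hQR
    rw [hNalt]
    calc trace (Rᵀ * (Qᵀ * (Wᵀ * Z))) = trace ((Q * R)ᵀ * (Wᵀ * Z)) := by
          rw [Matrix.transpose_mul, Matrix.mul_assoc]
      _ ≤ trace (Qᵀ * (Wᵀ * Z)) := hle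
  have hNsymm : Nᵀ = N := symm_of_max N hmaxN
  have hNherm : N.IsHermitian := by
    show Nᴴ = N; rw [Matrix.conjTranspose_eq_transpose_of_trivial, hNsymm]
  have hNpsd : N.PosSemidef := posSemidef_of_max N hNherm hmaxN
  set Am : Matrix (Fin k) (Fin k) ℝ := Δᵀ * X with hAmdef
  set Bm : Matrix (Fin k) (Fin k) ℝ := Xᵀ * X with hBmdef
  set Sm : Matrix (Fin k) (Fin k) ℝ := Δᵀ * Δ with hSmdef
  have hZtX : Zᵀ * X = N := by
    conv_rhs => rw [← hNsymm, hN]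
    rw [Matrix.transpose_mul, Matrix.transpose_transpose]
  have hAmN : Am = N - Bm := by
    rw [hAmdef, hΔ, Matrix.transpose_sub, Matrix.sub_mul, hZtX, hBmdef]
  have hXDAm : Xᵀ * Δ = Am := by
    rw [hΔ, Matrix.mul_sub, ← hN, ← hBmdef, hAmN]
  have hAmsymm : Amᵀ = Am := by
    rw [hAmdef, Matrix.transpose_mul, Matrix.transpose_transpose, hXDAm]
  have hSmsymm : Smᵀ = Sm := by
    rw [hSmdef, Matrix.transpose_mul, Matrix.transpose_transpose]
  have hSmpsd : Sm.PosSemidef := by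
    have h := Matrix.posSemidef_conjTranspose_mul_self Δ
    rwa [Matrix.conjTranspose_eq_transpose_of_trivial] at h
  have hBmshift : (Bm - σ • 1).PosSemidef := by
    have h2 := hshift.conjTranspose_mul_mul_same Q
    have h3 : Qᴴ * (Wᵀ * W - σ • 1) * Q = Bm - σ • 1 := by
      rw [Matrix.conjTranspose_eq_transpose_of_trivial]
      rw [Matrix.mul_sub, Matrix.sub_mul]
      congr 1
      · rw [hBmdef, hX, Matrix.transpose_mul]
        simp only [Matrix.mul_assoc]
      · rw [Matrix.mul_smul, Matrix.mul_one, Matrix.smul_mul, hQQ]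
    rwa [h3] at h2
  -- scalar quantities
  have hsbσt : σ * trace Sm ≤ trace (Sm * Bm) := by
    have h0 : 0 ≤ trace (Sm * (Bm - σ • 1)) := trace_mul_nonneg hSmpsd hBmshift
    have hexp : trace (Sm * (Bm - σ • 1)) = trace (Sm * Bm) - σ * trace Sm := by
      rw [Matrix.mul_sub, trace_sub, Matrix.mul_smul, Matrix.mul_one, trace_smul]
      simp
    linarith
  have hsasb : -(trace (Sm * Bm)) ≤ trace (Sm * Am) := by
    have h0 : 0 ≤ trace (Sm * N) := trace_mul_nonneg hSmpsd hNpsd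
    have hNAB : N = Am + Bm := by rw [hAmN]; abel
    have : trace (Sm * N) = trace (Sm * Am) + trace (Sm * Bm) := by
      rw [hNAB, Matrix.mul_add, trace_add]
    linarith
  -- Cauchy-Schwarz
  have ha2eq : trace (Am * Am) = ∑ i, ∑ j, (Am i j) ^ 2 := by
    rw [show Am * Am = Amᵀ * Am by rw [hAmsymm]]
    exact trace_transpose_mul Am
  have hs2eq : trace (Sm * Sm) = ∑ i, ∑ j, (Sm i j) ^ 2 := by
    rw [show Sm * Sm = Smᵀ * Sm by rw [hSmsymm]]
    exact trace_transpose_mul Sm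
  have ha2nn : 0 ≤ trace (Am * Am) := ha2eq ▸ sum_sq_nonneg Am
  have hs2nn : 0 ≤ trace (Sm * Sm) := hs2eq ▸ sum_sq_nonneg Sm
  set a : ℝ := Real.sqrt (trace (Am * Am)) with hadef
  set s : ℝ := Real.sqrt (trace (Sm * Sm)) with hsdef
  have ha2' : a ^ 2 = trace (Am * Am) := Real.sq_sqrt ha2nn
  have hs2' : s ^ 2 = trace (Sm * Sm) := Real.sq_sqrt hs2nn
  have ha0 : 0 ≤ a := Real.sqrt_nonneg _
  have hs0 : 0 ≤ s := Real.sqrt_nonneg _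
  have hCS : -(a * s) ≤ trace (Sm * Am) := by
    have hAe : ∀ p q, Am q p = Am p q := fun p q => congrFun (congrFun hAmsymm p) q
    have hsa_sum : trace (Sm * Am) = ∑ p, ∑ q, Sm p q * Am p q := by
      simp only [Matrix.trace, Matrix.diag, Matrix.mul_apply]
      exact Finset.sum_congr rfl fun p _ => Finset.sum_congr rfl fun q _ => by rw [hAe]
    have hcs2 : (∑ x : Fin k × Fin k, Sm x.1 x.2 * Am x.1 x.2) ^ 2 ≤
        (∑ x : Fin k × Fin k, Sm x.1 x.2 ^ 2) * (∑ x : Fin k × Fin k, Am x.1 x.2 ^ 2) :=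
      Finset.sum_mul_sq_le_sq_mul_sq _ _ _
    rw [Fintype.sum_prod_type] at hcs2
    rw [show (∑ x : Fin k × Fin k, Sm x.1 x.2 ^ 2) = ∑ p, ∑ q, Sm p q ^ 2 from
      Fintype.sum_prod_type _] at hcs2
    rw [show (∑ x : Fin k × Fin k, Am x.1 x.2 ^ 2) = ∑ p, ∑ q, Am p q ^ 2 from
      Fintype.sum_prod_type _] at hcs2
    rw [← hsa_sum, ← ha2eq, ← hs2eq, ← ha2', ← hs2'] at hcs2
    nlinarith [sq_nonneg (trace (Sm * Am) + a * s), sq_nonneg (trace (Sm * Am) - a * s),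
      mul_nonneg ha0 hs0]
  -- decomposition of the Gram difference
  have hXXt : X * Xᵀ = W * Wᵀ := by
    rw [hX, Matrix.transpose_mul]
    calc W * Q * (Qᵀ * Wᵀ) = W * (Q * Qᵀ) * Wᵀ := by simp only [Matrix.mul_assoc]
      _ = W * Wᵀ := by rw [hQorth, Matrix.mul_one]
  have hMdecomp : Z * Zᵀ - W * Wᵀ = Δ * Xᵀ + X * Δᵀ + Δ * Δᵀ := by
    rw [← hXXt, hΔ]
    simp only [Matrix.sub_mul, Matrix.mul_sub, Matrix.transpose_sub, Matrix.add_mul,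
      Matrix.mul_add]
    abel
  have hMsymm : (Z * Zᵀ - W * Wᵀ)ᵀ = Z * Zᵀ - W * Wᵀ := by
    simp [Matrix.transpose_sub, Matrix.transpose_mul]
  have hfrobM : frobNorm (Z * Zᵀ - W * Wᵀ) ^ 2 =
      trace ((Z * Zᵀ - W * Wᵀ) * (Z * Zᵀ - W * Wᵀ)) := by
    rw [frobNorm, Real.sq_sqrt (sum_sq_nonneg _), ← Stmt10Aux.trace_transpose_mul, hMsymm]
  have hexp : trace ((Z * Zᵀ - W * Wᵀ) * (Z * Zᵀ - W * Wᵀ)) =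
      2 * trace (Am * Am) + 2 * trace (Sm * Bm) + 4 * trace (Sm * Am) + trace (Sm * Sm) := by
    rw [hMdecomp]
    simp only [Matrix.add_mul, Matrix.mul_add, trace_add]
    rw [tr_quad Δ X Δ X, tr_quad Δ X X Δ, tr_quad Δ X Δ Δ, tr_quad X Δ Δ X,
        tr_quad X Δ X Δ, tr_quad X Δ Δ Δ, tr_quad Δ Δ Δ X, tr_quad Δ Δ X Δ,
        tr_quad Δ Δ Δ Δ, hXDAm, ← hAmdef, ← hBmdef, ← hSmdef,
        Matrix.trace_mul_comm Bm Sm, Matrix.trace_mul_comm Am Sm]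
    ring
  -- distO bound
  have hbdd : BddBelow {r : ℝ | ∃ Q' : Matrix (Fin k) (Fin k) ℝ, Q' * Q'ᵀ = 1 ∧
      r = frobNorm (Z - W * Q')} := by
    refine ⟨0, ?_⟩
    rintro r ⟨Q', hQ', rfl⟩
    exact Real.sqrt_nonneg _
  have hd0 : 0 ≤ distO Z W := by
    apply Real.sInf_nonneg
    rintro r ⟨Q', hQ', rfl⟩
    exact Real.sqrt_nonneg _
  have hdle : distO Z W ≤ frobNorm (Z - W * Q) := csInf_le hbdd ⟨Q, hQorth, rfl⟩
  have hfrobΔ : frobNorm (Z - W * Q) ^ 2 = trace Sm := by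
    rw [show Z - W * Q = Δ from by rw [hΔ, hX], frobNorm,
      Real.sq_sqrt (sum_sq_nonneg Δ), hSmdef, Stmt10Aux.trace_transpose_mul]
  have hdsq : distO Z W ^ 2 ≤ trace Sm := by
    rw [← hfrobΔ]
    exact pow_le_pow_left₀ hd0 hdle 2
  -- final numeric assembly
  set q2 : ℝ := Real.sqrt 2 with hq2
  have hq2a : q2 ^ 2 = 2 := Real.sq_sqrt (by norm_num)
  have hq2nn : 0 ≤ q2 := Real.sqrt_nonneg 2
  have hq2b : 1 < q2 := by nlinarith
  have hq2c : q2 ≤ 2 := by nlinarith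
  have hD : 0 < 2 * (q2 - 1) * σ := by
    apply mul_pos (mul_pos two_pos (by linarith)) hσpos
  rw [hfrobM, hexp, le_div_iff₀ hD]
  have step1 : distO Z W ^ 2 * (2 * (q2 - 1) * σ) ≤ trace Sm * (2 * (q2 - 1) * σ) :=
    mul_le_mul_of_nonneg_right hdsq hD.le
  have e1 : 0 ≤ 2 * a ^ 2 - 2 * q2 * (a * s) + s ^ 2 := by
    nlinarith [sq_nonneg (q2 * a - s), sq_nonneg a, sq_nonneg s]
  have e2 : 0 ≤ (4 - 2 * q2) * (trace (Sm * Am) + trace (Sm * Bm)) :=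
    mul_nonneg (by linarith) (by linarith)
  have e3 : 0 ≤ 2 * q2 * (trace (Sm * Am) + a * s) :=
    mul_nonneg (by linarith) (by linarith)
  have e4 : 0 ≤ (2 * q2 - 2) * (trace (Sm * Bm) - σ * trace Sm) :=
    mul_nonneg (by linarith) (by linarith)
  have step2 : trace Sm * (2 * (q2 - 1) * σ) ≤
      2 * trace (Am * Am) + 2 * trace (Sm * Bm) + 4 * trace (Sm * Am) + trace (Sm * Sm) := by
    rw [← ha2', ← hs2']
    linarith
  linarith
end

section
/- Let B ∈ ℝ^{m×m} be symmetric and let U ∈ ℝ^{m×r} have linearly independent columns whose span equals the column space of B. Then Uᵀ B U ∈ ℝ^{r×r} is invertible, and the matrix M = U (Uᵀ B U)^{-1} Uᵀ satisfies the four Penrose equations: B M B = B, M B M = M, (B M)ᵀ = B M, and (M B)ᵀ = M B; that is, M is the Moore–Penrose pseudoinverse B⁺ of B. In particular, M does not depend on the choice of basis U of the column space of B. -/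
open Matrix

private lemma penrose_aux {m r : ℕ} (B : Matrix (Fin m) (Fin m) ℝ) (hB : Bᵀ = B)
    (U : Matrix (Fin m) (Fin r) ℝ)
    (hUind : LinearIndependent ℝ (fun j : Fin r => Uᵀ j))
    (hUspan : Submodule.span ℝ (Set.range fun j : Fin r => Uᵀ j)
        = LinearMap.range B.mulVecLin) :
    IsUnit (Uᵀ * B * U) ∧
      B * (U * (Uᵀ * B * U)⁻¹ * Uᵀ) * B = B ∧
      (U * (Uᵀ * B * U)⁻¹ * Uᵀ) * B * (U * (Uᵀ * B * U)⁻¹ * Uᵀ)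
        = U * (Uᵀ * B * U)⁻¹ * Uᵀ ∧
      (B * (U * (Uᵀ * B * U)⁻¹ * Uᵀ))ᵀ = B * (U * (Uᵀ * B * U)⁻¹ * Uᵀ) ∧
      ((U * (Uᵀ * B * U)⁻¹ * Uᵀ) * B)ᵀ = (U * (Uᵀ * B * U)⁻¹ * Uᵀ) * B := by
  have hrange : LinearMap.range U.mulVecLin = LinearMap.range B.mulVecLin := by
    rw [Matrix.range_mulVecLin]; exact hUspan
  -- U.mulVec injective
  have hUinj : ∀ x : Fin r → ℝ, U.mulVec x = 0 → x = 0 := by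
    intro x hx
    have := Fintype.linearIndependent_iff.mp hUind x ?_
    · funext j; exact this j
    · funext i
      have : (∑ j, x j • Uᵀ j) i = U.mulVec x i := by
        simp [Matrix.mulVec, dotProduct, Finset.sum_apply, mul_comm]
      rw [this, hx]
  -- invertibility of UᵀBU
  have hkey : ∀ x : Fin r → ℝ, (Uᵀ * B * U).mulVec x = 0 → x = 0 := by
    intro x hx
    set w : Fin m → ℝ := U.mulVec x with hw
    set v : Fin m → ℝ := B.mulVec w with hvdef
    have hv0 : Uᵀ.mulVec v = 0 := by
      rw [hvdef, hw, Matrix.mulVec_mulVec, Matrix.mulVec_mulVec]; exact hx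
    -- v ∈ range U
    have hvU : ∃ c, U.mulVec c = v := by
      have : v ∈ LinearMap.range B.mulVecLin := ⟨w, rfl⟩
      rw [← hrange] at this
      obtain ⟨c, hc⟩ := this
      exact ⟨c, hc⟩
    obtain ⟨c, hc⟩ := hvU
    have hv : v = 0 := by
      have : v ⬝ᵥ v = 0 := by
        calc v ⬝ᵥ v = v ⬝ᵥ U.mulVec c := by rw [hc]
          _ = (v ᵥ* U) ⬝ᵥ c := Matrix.dotProduct_mulVec _ _ _
          _ = (Uᵀ.mulVec v) ⬝ᵥ c := by rw [← Matrix.vecMul_transpose, transpose_transpose]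
          _ = 0 := by rw [hv0, zero_dotProduct]
      rwa [dotProduct_self_eq_zero] at this
    -- w ∈ range B
    have hwB : ∃ y, B.mulVec y = w := by
      have : w ∈ LinearMap.range U.mulVecLin := ⟨x, rfl⟩
      rw [hrange] at this
      obtain ⟨y, hy⟩ := this
      exact ⟨y, hy⟩
    obtain ⟨y, hy⟩ := hwB
    have hw0 : w = 0 := by
      have hBw : B.mulVec w = 0 := hv ▸ rfl
      have : w ⬝ᵥ w = 0 := by
        calc w ⬝ᵥ w = w ⬝ᵥ B.mulVec y := by rw [hy]
          _ = (w ᵥ* B) ⬝ᵥ y := Matrix.dotProduct_mulVec _ _ _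
          _ = (Bᵀ.mulVec w) ⬝ᵥ y := by rw [← Matrix.vecMul_transpose, transpose_transpose]
          _ = (B.mulVec w) ⬝ᵥ y := by rw [hB]
          _ = 0 := by rw [hBw, zero_dotProduct]
      rwa [dotProduct_self_eq_zero] at this
    exact hUinj x hw0
  have hUnit : IsUnit (Uᵀ * B * U) := by
    rw [← Matrix.mulVec_injective_iff_isUnit]
    intro a b hab
    have : (Uᵀ * B * U).mulVec (a - b) = 0 := by
      rw [Matrix.mulVec_sub, hab, sub_self]
    have := hkey _ this
    exact sub_eq_zero.mp this
  have hdet : IsUnit (Uᵀ * B * U).det := (Matrix.isUnit_iff_isUnit_det _).mp hUnit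
  set G : Matrix (Fin r) (Fin r) ℝ := (Uᵀ * B * U)⁻¹ with hGdef
  have hGA : G * (Uᵀ * B * U) = 1 := Matrix.nonsing_inv_mul _ hdet
  have hAG : (Uᵀ * B * U) * G = 1 := Matrix.mul_nonsing_inv _ hdet
  have hGsym : Gᵀ = G := by
    rw [hGdef, Matrix.transpose_nonsing_inv]
    congr 1
    rw [Matrix.transpose_mul, Matrix.transpose_mul, transpose_transpose, hB, Matrix.mul_assoc]
  -- B = U * C
  have hcol : ∀ k : Fin m, ∃ c : Fin r → ℝ, U.mulVec c = Bᵀ k := by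
    intro k
    have : Bᵀ k ∈ LinearMap.range B.mulVecLin :=
      ⟨Pi.single k 1, by simp only [Matrix.mulVecLin_apply, Matrix.mulVec_single_one]; rfl⟩
    rw [← hrange] at this
    obtain ⟨c, hc⟩ := this
    exact ⟨c, hc⟩
  set C : Matrix (Fin r) (Fin m) ℝ :=
    Matrix.of (fun j k => (hcol k).choose j) with hCdef
  have hBC : B = U * C := by
    ext i k
    have := (hcol k).choose_spec
    have h2 : U.mulVec ((hcol k).choose) i = Bᵀ k i := by rw [this]
    calc B i k = Bᵀ k i := rfl
      _ = U.mulVec ((hcol k).choose) i := h2.symm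
      _ = (U * C) i k := by
          simp [Matrix.mulVec, Matrix.mul_apply, dotProduct, hCdef]
  set M : Matrix (Fin m) (Fin m) ℝ := U * G * Uᵀ with hMdef
  have key : ∀ X : Matrix (Fin r) (Fin m) ℝ, M * (B * (U * X)) = U * X := by
    intro X
    calc M * (B * (U * X)) = U * (G * (Uᵀ * B * U)) * X := by
          simp only [hMdef, Matrix.mul_assoc]
      _ = U * X := by rw [hGA, Matrix.mul_one]
  have hMBB : M * B * B = B := by
    calc M * B * B = M * (B * (U * C)) := by
          rw [← hBC, Matrix.mul_assoc]
      _ = U * C := key C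
      _ = B := hBC.symm
  have hMBM : M * B * M = M := by
    calc M * B * M = M * (B * (U * (G * Uᵀ))) := by
          simp only [hMdef, Matrix.mul_assoc]
      _ = U * (G * Uᵀ) := key _
      _ = M := by simp only [hMdef, Matrix.mul_assoc]
  have hMsym : Mᵀ = M := by
    rw [hMdef, Matrix.transpose_mul, Matrix.transpose_mul, transpose_transpose, hGsym,
      Matrix.mul_assoc]
  have hBMsym : (B * M)ᵀ = B * M := by
    have h2 : (B * M)ᵀ * (B * M) = B * M := by
      rw [Matrix.transpose_mul, hMsym, hB]
      calc M * B * (B * M) = M * B * B * M := by rw [Matrix.mul_assoc (M * B)]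
        _ = B * M := by rw [hMBB]
    conv_lhs => rw [← h2]
    rw [Matrix.transpose_mul, transpose_transpose, h2]
  have hcomm : M * B = B * M := by
    have := hBMsym
    rw [Matrix.transpose_mul, hMsym, hB] at this
    exact this
  have hBMB : B * M * B = B := by rw [← hcomm, hMBB]
  have hMBsym : (M * B)ᵀ = M * B := by rw [hcomm]; exact hBMsym
  exact ⟨hUnit, hBMB, hMBM, hBMsym, hMBsym⟩

/-- If `B` is symmetric and the columns of `U` form a basis of the column
space of `B`, then `Uᵀ B U` is invertible and `M = U (Uᵀ B U)⁻¹ Uᵀ` satisfies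
the four Penrose equations, i.e. `M = B⁺`; in particular `M` does not depend
on the choice of basis `U`. -/
theorem stmt17 {m r : ℕ} (B : Matrix (Fin m) (Fin m) ℝ) (hB : Bᵀ = B)
    (U : Matrix (Fin m) (Fin r) ℝ)
    (hUind : LinearIndependent ℝ (fun j : Fin r => Uᵀ j))
    (hUspan : Submodule.span ℝ (Set.range fun j : Fin r => Uᵀ j)
        = LinearMap.range B.mulVecLin) :
    IsUnit (Uᵀ * B * U) ∧
    (B * (U * (Uᵀ * B * U)⁻¹ * Uᵀ) * B = B ∧
      (U * (Uᵀ * B * U)⁻¹ * Uᵀ) * B * (U * (Uᵀ * B * U)⁻¹ * Uᵀ)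
        = U * (Uᵀ * B * U)⁻¹ * Uᵀ ∧
      (B * (U * (Uᵀ * B * U)⁻¹ * Uᵀ))ᵀ = B * (U * (Uᵀ * B * U)⁻¹ * Uᵀ) ∧
      ((U * (Uᵀ * B * U)⁻¹ * Uᵀ) * B)ᵀ = (U * (Uᵀ * B * U)⁻¹ * Uᵀ) * B) ∧
    (∀ U' : Matrix (Fin m) (Fin r) ℝ,
      LinearIndependent ℝ (fun j : Fin r => U'ᵀ j) →
      Submodule.span ℝ (Set.range fun j : Fin r => U'ᵀ j)
          = LinearMap.range B.mulVecLin →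
      U * (Uᵀ * B * U)⁻¹ * Uᵀ = U' * (U'ᵀ * B * U')⁻¹ * U'ᵀ) := by
  obtain ⟨hUnit, hBMB, hMBM, hBMsym, hMBsym⟩ := penrose_aux B hB U hUind hUspan
  refine ⟨hUnit, ⟨hBMB, hMBM, hBMsym, hMBsym⟩, ?_⟩
  intro U' hUind' hUspan'
  obtain ⟨_, hBNB, hNBN, hBNsym, hNBsym⟩ := penrose_aux B hB U' hUind' hUspan'
  set M : Matrix (Fin m) (Fin m) ℝ := U * (Uᵀ * B * U)⁻¹ * Uᵀ
  set N : Matrix (Fin m) (Fin m) ℝ := U' * (U'ᵀ * B * U')⁻¹ * U'ᵀ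
  -- uniqueness of the pseudoinverse
  have hBM : B * M = B * N := by
    calc B * M = (B * M)ᵀ := hBMsym.symm
      _ = Mᵀ * Bᵀ := Matrix.transpose_mul _ _
      _ = Mᵀ * (B * N * B)ᵀ := by rw [hBNB]
      _ = Mᵀ * (Bᵀ * (B * N)ᵀ) := by rw [Matrix.transpose_mul (B * N) B]
      _ = Mᵀ * Bᵀ * (B * N)ᵀ := by rw [Matrix.mul_assoc]
      _ = (B * M)ᵀ * (B * N)ᵀ := by rw [Matrix.transpose_mul B M]
      _ = B * M * (B * N) := by rw [hBMsym, hBNsym]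
      _ = B * M * B * N := by rw [Matrix.mul_assoc (B * M)]
      _ = B * N := by rw [hBMB]
  have hMB : M * B = N * B := by
    calc M * B = (M * B)ᵀ := hMBsym.symm
      _ = Bᵀ * Mᵀ := Matrix.transpose_mul _ _
      _ = (B * N * B)ᵀ * Mᵀ := by rw [hBNB]
      _ = (B * (N * B))ᵀ * Mᵀ := by rw [Matrix.mul_assoc]
      _ = (N * B)ᵀ * Bᵀ * Mᵀ := by rw [Matrix.transpose_mul B (N * B)]
      _ = (N * B)ᵀ * (Bᵀ * Mᵀ) := by rw [Matrix.mul_assoc]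
      _ = (N * B)ᵀ * (M * B)ᵀ := by rw [Matrix.transpose_mul M B]
      _ = N * B * (M * B) := by rw [hNBsym, hMBsym]
      _ = N * (B * M * B) := by simp only [Matrix.mul_assoc]
      _ = N * B := by rw [hBMB]
  calc M = M * B * M := hMBM.symm
    _ = N * B * M := by rw [hMB]
    _ = N * (B * M) := Matrix.mul_assoc _ _ _
    _ = N * (B * N) := by rw [hBM]
    _ = N * B * N := (Matrix.mul_assoc _ _ _).symm
    _ = N := hNBN
end
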